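/- Let Φ be irreducible, α ∈ Π, and for k ∈ ℤ let Φ_{α,k} = {γ ∈ Φ : c_α(γ) = k}. For 1 ≤ k ≤ m_α (where m_α is the α-coefficient of the highest root), let γ ∈ Φ_{α,k} have maximal length in Φ_{α,k}, and let Ψ_1,…,Ψ_t be the irreducible components of Φ⟨Π\{α}⟩ with γ ⊥ Ψ_i exactly for i > h. Then the dimension of conv(Φ_{α,k}) equals the rank of Ψ_1 ∪ … ∪ Ψ_h. -/

import Mathlib

open scoped RealInnerProductSpace
attribute [local instance] Classical.propDecidable

variable {E : Type*} [NormedAddCommGroup E] [InnerProductSpace ℝ E] [FiniteDimensional ℝ E]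

set_option linter.unusedSectionVars false
set_option maxHeartbeats 1000000

lemma inner_span_zero {s : Set E} {v : E} (h0 : ∀ x ∈ s, ⟪v, x⟫ = 0) :
    ∀ y ∈ Submodule.span ℝ s, ⟪v, y⟫ = 0 := by
  intro y hy
  induction hy using Submodule.span_induction with
  | mem x hx => exact h0 x hx
  | zero => simp
  | add x y _ _ hx hy => rw [inner_add_right, hx, hy, add_zero]
  | smul a x _ hx => rw [real_inner_smul_right, hx, mul_zero]

lemma obtuse_inner_nonneg (s : Finset E)
    (hobt : ∀ a ∈ s, ∀ b ∈ s, a ≠ b → ⟪a, b⟫ ≤ 0)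
    (u w : E) (hw : w ∈ Submodule.span ℝ (s : Set E))
    (hu : ∀ a ∈ s, 0 ≤ ⟪u, a⟫) (hwd : ∀ a ∈ s, 0 ≤ ⟪w, a⟫) : 0 ≤ ⟪u, w⟫ := by
  obtain ⟨f, -, hf⟩ := Submodule.mem_span_finset.mp hw
  set P := s.filter (fun a => 0 ≤ f a) with hP
  set N := s.filter (fun a => ¬ 0 ≤ f a) with hN
  set wp := ∑ a ∈ P, f a • a with hwp
  set wn := ∑ a ∈ N, (-f a) • a with hwn
  have hsplit : w = wp - wn := by
    rw [hwp, hwn]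
    have h1 : ∑ a ∈ N, (-f a) • a = -∑ a ∈ N, f a • a := by simp [neg_smul]
    rw [h1, sub_neg_eq_add, hP, hN, Finset.sum_filter_add_sum_filter_not, hf]
  have hpn : ⟪wp, wn⟫ ≤ 0 := by
    rw [hwp, hwn, sum_inner]
    apply Finset.sum_nonpos; intro a ha
    rw [inner_sum]; apply Finset.sum_nonpos; intro b hb
    rw [real_inner_smul_left, real_inner_smul_right]
    obtain ⟨has, haf⟩ := Finset.mem_filter.mp ha
    obtain ⟨hbs, hbf⟩ := Finset.mem_filter.mp hb
    have hab : a ≠ b := fun he => hbf (he ▸ haf)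
    have h2 := hobt a has b hbs hab
    have h3 : f b < 0 := lt_of_not_ge hbf
    nlinarith [mul_nonneg haf (neg_nonneg.mpr (le_of_lt h3))]
  have hwn_w : 0 ≤ ⟪w, wn⟫ := by
    rw [hwn, inner_sum]
    apply Finset.sum_nonneg; intro b hb
    rw [real_inner_smul_right]
    obtain ⟨hbs, hbf⟩ := Finset.mem_filter.mp hb
    have h3 : f b < 0 := lt_of_not_ge hbf
    exact mul_nonneg (by linarith) (hwd b hbs)
  have hwncalc : ⟪w, wn⟫ = ⟪wp, wn⟫ - ⟪wn, wn⟫ := by rw [hsplit, inner_sub_left]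
  have hwn0 : wn = 0 := inner_self_eq_zero.mp
    (le_antisymm (by linarith) real_inner_self_nonneg)
  rw [hsplit, hwn0, sub_zero, hwp, inner_sum]
  apply Finset.sum_nonneg; intro a ha
  rw [real_inner_smul_right]
  obtain ⟨has, haf⟩ := Finset.mem_filter.mp ha
  exact mul_nonneg haf (hu a has)

/-- A finite reduced crystallographic root system spanning `E`. -/
structure IsRootSystem (Φ : Finset E) : Prop where
  nonzero : ∀ γ ∈ Φ, γ ≠ (0 : E)
  span_top : Submodule.span ℝ (Φ : Set E) = ⊤
  reduced : ∀ γ ∈ Φ, ∀ t : ℝ, t • γ ∈ Φ → t = 1 ∨ t = -1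
  reflect : ∀ γ ∈ Φ, ∀ δ ∈ Φ, δ - (2 * ⟪δ, γ⟫ / ⟪γ, γ⟫) • γ ∈ Φ
  cry : ∀ γ ∈ Φ, ∀ δ ∈ Φ, ∃ n : ℤ, 2 * ⟪δ, γ⟫ / ⟪γ, γ⟫ = (n : ℝ)

/-- `Δ` is a simple system (base) for `Φ`, and `c γ a` is the coordinate of `γ`
on the simple root `a`. -/
structure IsBase (Φ Δ : Finset E) (c : E → E → ℝ) : Prop where
  subset : Δ ⊆ Φ
  indep : LinearIndependent ℝ (fun x : (Δ : Set E) => (x : E))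
  repr : ∀ γ ∈ Φ, γ = ∑ a ∈ Δ, c γ a • a
  int : ∀ γ ∈ Φ, ∀ a ∈ Δ, ∃ n : ℤ, c γ a = (n : ℝ)
  sign : ∀ γ ∈ Φ, (∀ a ∈ Δ, 0 ≤ c γ a) ∨ (∀ a ∈ Δ, c γ a ≤ 0)

/-- Irreducibility: no splitting into two nonempty mutually orthogonal parts. -/
def IsIrredSys (Φ : Finset E) : Prop :=
  ∀ s : Set E, s ⊆ (Φ : Set E) → (∀ x ∈ s, ∀ y ∈ (Φ : Set E) \ s, ⟪x, y⟫ = 0) →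
    s = ∅ ∨ s = (Φ : Set E)

/-- Irreducibility of a set of roots: no splitting into two nonempty mutually
orthogonal parts. -/
def IsIrredSet (s : Set E) : Prop :=
  ∀ t : Set E, t ⊆ s → (∀ x ∈ t, ∀ y ∈ s \ t, ⟪x, y⟫ = 0) → t = ∅ ∨ t = s

/-- Let `Φ_{α,k}` be the set of roots with `α`-coordinate `k`, `1 ≤ k ≤ m_α`, let `γ` be
of maximal length in `Φ_{α,k}` and let `Ψ₀, …, Ψ_{t-1}` be the irreducible components of
the parabolic subsystem `Φ⟨Π \ {α}⟩`, with `γ ⊥ Ψᵢ` exactly for `i ≥ h`.  Then the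
dimension of `conv(Φ_{α,k})` equals the rank of `Ψ₀ ∪ … ∪ Ψ_{h-1}`. -/
theorem stmt16 (Φ Δ : Finset E) (c : E → E → ℝ)
    (hΦ : IsRootSystem Φ) (hB : IsBase Φ Δ c) (hirr : IsIrredSys Φ)
    (α : E) (hα : α ∈ Δ) (θ : E)
    (hθ : θ ∈ Φ ∧ ∀ γ ∈ Φ, ∀ a ∈ Δ, c γ a ≤ c θ a)
    (k : ℕ) (hk1 : 1 ≤ k) (hkm : (k : ℝ) ≤ c θ α)
    (t : ℕ) (Ψ : Fin t → Set E)
    (hcover : (⋃ i, Ψ i) = {γ : E | γ ∈ Φ ∧ c γ α = 0})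
    (hne : ∀ i, (Ψ i).Nonempty)
    (horth : ∀ i j, i ≠ j → ∀ x ∈ Ψ i, ∀ y ∈ Ψ j, ⟪x, y⟫ = 0)
    (hirrc : ∀ i, IsIrredSet (Ψ i))
    (γ : E) (hγ : γ ∈ Φ ∧ c γ α = (k : ℝ))
    (hγmax : ∀ δ ∈ Φ, c δ α = (k : ℝ) → ‖δ‖ ≤ ‖γ‖)
    (h : ℕ) (hht : h ≤ t)
    (hγorth : ∀ i : Fin t, (∀ δ ∈ Ψ i, ⟪γ, δ⟫ = 0) ↔ h ≤ i.val) :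
    Module.finrank ℝ (vectorSpan ℝ (convexHull ℝ {δ : E | δ ∈ Φ ∧ c δ α = (k : ℝ)})) =
      Module.finrank ℝ
        (Submodule.span ℝ {x : E | ∃ i : Fin t, i.val < h ∧ x ∈ Ψ i}) := by
  classical
  obtain ⟨hγΦ, hγα⟩ := hγ
  -- positivity of inner products of roots with themselves
  have hpos0 : ∀ v ∈ Φ, (0:ℝ) < ⟪v, v⟫ := fun v hv =>
    lt_of_le_of_ne real_inner_self_nonneg (Ne.symm (inner_self_ne_zero.mpr (hΦ.nonzero v hv)))
  -- linear independence workhorse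
  have hli : ∀ f : E → ℝ, (∑ a ∈ Δ, f a • a) = 0 → ∀ a ∈ Δ, f a = 0 := by
    intro f hf a ha
    have h1 := (Fintype.linearIndependent_iff.mp hB.indep) (fun x => f x)
    have h2 : ∑ i : (Δ : Set E), f i • (i : E) = 0 := by
      rw [show ∑ i : (Δ : Set E), f (i:E) • (i:E) = ∑ a ∈ Δ, f a • a from
        Finset.sum_coe_sort Δ (fun a => f a • a)]
      exact hf
    exact h1 h2 ⟨a, ha⟩
  -- negation closure
  have hneg : ∀ v ∈ Φ, -v ∈ Φ := by
    intro v hv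
    have h1 := hΦ.reflect v hv v hv
    have h2 : (2 * ⟪v, v⟫ / ⟪v, v⟫ : ℝ) = 2 := by
      have : ⟪v, v⟫ ≠ (0:ℝ) := inner_self_ne_zero.mpr (hΦ.nonzero v hv)
      field_simp
    rw [h2] at h1
    have h3 : v - (2:ℝ) • v = -v := by module
    rwa [h3] at h1
  -- coordinates of simple roots
  have hcΔ : ∀ a ∈ Δ, ∀ b ∈ Δ, c a b = if b = a then 1 else 0 := by
    intro a ha b hb
    have h0 : ∑ x ∈ Δ, (c a x - if x = a then 1 else 0) • x = 0 := by
      have e1 := hB.repr a (hB.subset ha)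
      have e2 : ∑ x ∈ Δ, (if x = a then (1:ℝ) else 0) • x = a := by
        have h3 : ∀ x ∈ Δ, (if x = a then (1:ℝ) else 0) • x = if x = a then x else 0 := by
          intro x hx; split <;> [exact one_smul ℝ x; exact zero_smul ℝ x]
        rw [Finset.sum_congr rfl h3, Finset.sum_ite_eq' Δ a (fun x => x), if_pos ha]
      rw [show (fun x => (c a x - if x = a then (1:ℝ) else 0) • x) = fun x =>
        (c a x • x - (if x = a then (1:ℝ) else 0) • x) from funext fun x => by rw [sub_smul]]
      rw [Finset.sum_sub_distrib, e2, ← e1, sub_self]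
    have := hli _ h0 b hb
    linarith [this]
  -- coordinates of differences
  have hsub : ∀ v ∈ Φ, ∀ w ∈ Φ, ∀ r : ℝ, (v - r • w) ∈ Φ →
      ∀ a ∈ Δ, c (v - r • w) a = c v a - r * c w a := by
    intro v hv w hw r hvw a ha
    have h0 : ∑ x ∈ Δ, (c (v - r • w) x - (c v x - r * c w x)) • x = 0 := by
      have e1 := hB.repr v hv
      have e2 := hB.repr w hw
      have e3 := hB.repr _ hvw
      have expand : ∑ x ∈ Δ, (c (v - r • w) x - (c v x - r * c w x)) • x
          = (∑ x ∈ Δ, c (v - r • w) x • x) - ((∑ x ∈ Δ, c v x • x)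
            - r • ∑ x ∈ Δ, c w x • x) := by
        rw [Finset.smul_sum, ← Finset.sum_sub_distrib, ← Finset.sum_sub_distrib]
        refine Finset.sum_congr rfl fun x hx => ?_
        rw [sub_smul, sub_smul, smul_smul]
      rw [expand, ← e1, ← e2, ← e3, sub_self]
    have := hli _ h0 a ha
    linarith [this]
  -- difference of roots with positive inner product is a root
  have hdiffroot : ∀ u ∈ Φ, ∀ v ∈ Φ, u ≠ v → 0 < ⟪u, v⟫ → u - v ∈ Φ := by
    intro u hu v hv huv hpos
    obtain ⟨n, hn⟩ := hΦ.cry v hv u hu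
    obtain ⟨m, hm⟩ := hΦ.cry u hu v hv
    have huu := hpos0 u hu
    have hvv := hpos0 v hv
    have hnpos : (0:ℝ) < n := by rw [← hn]; positivity
    have hmpos : (0:ℝ) < m := by
      rw [← hm]; rw [real_inner_comm] at hpos; positivity
    by_cases hn1 : (n:ℝ) = 1
    · have h1 := hΦ.reflect v hv u hu
      rwa [hn, hn1, one_smul] at h1
    by_cases hm1 : (m:ℝ) = 1
    · have h1 := hΦ.reflect u hu v hv
      rw [hm, hm1, one_smul] at h1
      have h2 := hneg _ h1
      rwa [neg_sub] at h2
    exfalso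
    have hn2 : (2:ℝ) ≤ n := by
      have h1 : (0:ℤ) < n := by exact_mod_cast hnpos
      have h2 : n ≠ 1 := fun hh => hn1 (by rw [hh]; norm_num)
      have : (2:ℤ) ≤ n := by omega
      exact_mod_cast this
    have hm2 : (2:ℝ) ≤ m := by
      have h1 : (0:ℤ) < m := by exact_mod_cast hmpos
      have h2 : m ≠ 1 := fun hh => hm1 (by rw [hh]; norm_num)
      have : (2:ℤ) ≤ m := by omega
      exact_mod_cast this
    have hprod : 4 * ⟪u, v⟫ ^ 2 = (n:ℝ) * m * (⟪u, u⟫ * ⟪v, v⟫) := by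
      have hvu : ⟪v, u⟫ = ⟪u, v⟫ := real_inner_comm u v
      have e1 : (n:ℝ) * ⟪v, v⟫ = 2 * ⟪u, v⟫ := by
        rw [← hn]; field_simp
      have e2 : (m:ℝ) * ⟪u, u⟫ = 2 * ⟪u, v⟫ := by
        rw [← hm]; field_simp; linarith [hvu]
      nlinarith [e1, e2]
    have hCS : ⟪u, v⟫ ^ 2 ≤ ⟪u, u⟫ * ⟪v, v⟫ := by
      have := real_inner_mul_inner_self_le u v
      nlinarith [this]
    have hnm : (4:ℝ) ≤ (n:ℝ) * m := by nlinarith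
    have hge : ⟪u, u⟫ * ⟪v, v⟫ ≤ ⟪u, v⟫ ^ 2 := by nlinarith [mul_pos huu hvv]
    have habs : |⟪u, v⟫ / (‖u‖ * ‖v‖)| = 1 := by
      have h1 : ⟪u, u⟫ = ‖u‖ ^ 2 := real_inner_self_eq_norm_sq u
      have h2 : ⟪v, v⟫ = ‖v‖ ^ 2 := real_inner_self_eq_norm_sq v
      have hnu : (0:ℝ) < ‖u‖ := norm_pos_iff.mpr (hΦ.nonzero u hu)
      have hnv : (0:ℝ) < ‖v‖ := norm_pos_iff.mpr (hΦ.nonzero v hv)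
      have heq : ⟪u, v⟫ ^ 2 = (‖u‖ * ‖v‖) ^ 2 := by nlinarith
      have hBp : (0:ℝ) < ‖u‖ * ‖v‖ := by positivity
      have h3 : |⟪u, v⟫| = ‖u‖ * ‖v‖ := by
        rw [← Real.sqrt_sq_eq_abs, heq, Real.sqrt_sq hBp.le]
      rw [abs_div, h3, abs_of_pos hBp, div_self hBp.ne']
    obtain ⟨-, r, hr0, hru⟩ := (abs_real_inner_div_norm_mul_norm_eq_one_iff u v).mp habs
    rcases hΦ.reduced u hu r (hru ▸ hv) with h1 | h1
    · exact huv (by rw [h1, one_smul] at hru; exact hru.symm)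
    · rw [h1, neg_one_smul] at hru
      rw [hru, inner_neg_right] at hpos
      linarith [huu]
  -- distinct simple roots are obtuse
  have hobtuse : ∀ a ∈ Δ, ∀ b ∈ Δ, a ≠ b → ⟪a, b⟫ ≤ 0 := by
    intro a ha b hb hab
    by_contra hpos
    push_neg at hpos
    have haΦ := hB.subset ha
    have hbΦ := hB.subset hb
    have hd : a - b ∈ Φ := hdiffroot a haΦ b hbΦ hab hpos
    have hd1 : a - (1:ℝ) • b ∈ Φ := by rwa [one_smul]
    have hc := hsub a haΦ b hbΦ 1 hd1
    have hca : c (a - (1:ℝ) • b) a = 1 := by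
      rw [hc a ha, hcΔ a ha a ha, hcΔ b hb a ha, if_pos rfl, if_neg hab]
      ring
    have hcb : c (a - (1:ℝ) • b) b = -1 := by
      rw [hc b hb, hcΔ a ha b hb, hcΔ b hb b hb, if_pos rfl,
        if_neg (fun hh => hab hh.symm)]
      ring
    rcases hB.sign _ hd1 with hs | hs
    · linarith [hs b hb]
    · linarith [hs a ha]
  -- the parabolic subsystem
  set Δ' : Finset E := Δ.erase α with hΔ'def
  have hΔ'Δ : ∀ a ∈ Δ', a ∈ Δ := fun a ha => Finset.mem_of_mem_erase ha
  have hΔ'ne : ∀ a ∈ Δ', a ≠ α := fun a ha => Finset.ne_of_mem_erase ha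
  have hcaα : ∀ a ∈ Δ', c a α = 0 := by
    intro a ha
    rw [hcΔ a (hΔ'Δ a ha) α hα]
    exact if_neg (fun hh => (hΔ'ne a ha) hh.symm)
  have hΨΦ : ∀ (i : Fin t), ∀ x ∈ Ψ i, x ∈ Φ ∧ c x α = 0 := by
    intro i x hx
    have h1 : x ∈ ⋃ j, Ψ j := Set.mem_iUnion.mpr ⟨i, hx⟩
    rw [hcover] at h1
    exact h1
  have hmem0 : ∀ v, v ∈ Φ → c v α = 0 → ∃ i, v ∈ Ψ i := by
    intro v hv hv0
    have h1 : v ∈ ⋃ j, Ψ j := by rw [hcover]; exact ⟨hv, hv0⟩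
    exact Set.mem_iUnion.mp h1
  have haΨ : ∀ a ∈ Δ', ∃ j, a ∈ Ψ j := fun a ha =>
    hmem0 a (hB.subset (hΔ'Δ a ha)) (hcaα a ha)
  -- difference representation over Δ'
  have hdiffrep : ∀ u ∈ Φ, ∀ v ∈ Φ, c u α = c v α →
      u - v = ∑ a ∈ Δ', (c u a - c v a) • a := by
    intro u hu v hv he
    have e1 := hB.repr u hu
    have e2 := hB.repr v hv
    have h3 : u - v = ∑ a ∈ Δ, (c u a - c v a) • a := by
      rw [show (fun a => (c u a - c v a) • a) = fun a => (c u a • a - c v a • a) from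
        funext fun a => sub_smul _ _ _]
      rw [Finset.sum_sub_distrib, ← e1, ← e2]
    rw [h3, ← Finset.add_sum_erase Δ _ hα, he, sub_self, zero_smul, zero_add]
  -- STEP A : all roots of level k are orthogonal to the components i ≥ h
  have hA : ∀ (i : Fin t), h ≤ i.val → ∀ δ ∈ Φ, c δ α = (k:ℝ) → ∀ x ∈ Ψ i, ⟪δ, x⟫ = 0 := by
    intro i hi
    by_contra hbad
    push_neg at hbad
    obtain ⟨δ0, hδ0Φ, hδ0α, x0, hx0, hx0ne⟩ := hbad
    -- parabolic height
    set ht' : E → ℝ := fun v => ∑ a ∈ Δ', c v a with hht'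
    -- the reflection step
    have hstep : ∀ v ∈ Φ, c v α = (k:ℝ) → ∀ a ∈ Δ', ⟪v, a⟫ < 0 →
        (v - (2 * ⟪v, a⟫ / ⟪a, a⟫) • a) ∈ Φ ∧
        c (v - (2 * ⟪v, a⟫ / ⟪a, a⟫) • a) α = (k:ℝ) ∧
        ‖v - (2 * ⟪v, a⟫ / ⟪a, a⟫) • a‖ = ‖v‖ ∧
        ht' v < ht' (v - (2 * ⟪v, a⟫ / ⟪a, a⟫) • a) := by
      intro v hv hvα a ha hva
      have haΔ := hΔ'Δ a ha
      have haΦ := hB.subset haΔ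
      have haa := hpos0 a haΦ
      set r : ℝ := 2 * ⟪v, a⟫ / ⟪a, a⟫ with hrdef
      have hra : r * ⟪a, a⟫ = 2 * ⟪v, a⟫ := by rw [hrdef]; field_simp
      have hrneg : r < 0 := div_neg_of_neg_of_pos (by linarith) haa
      have hv' : v - r • a ∈ Φ := hΦ.reflect a haΦ v hv
      have hcoords := hsub v hv a haΦ r hv'
      refine ⟨hv', ?_, ?_, ?_⟩
      · rw [hcoords α hα, hcaα a ha, mul_zero, sub_zero, hvα]
      · have expand : ⟪v - r • a, v - r • a⟫ = ⟪v, v⟫ - 2 * r * ⟪v, a⟫ + r ^ 2 * ⟪a, a⟫ := by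
          simp only [inner_sub_left, inner_sub_right, real_inner_smul_left,
            real_inner_smul_right, real_inner_comm a v]
          ring
        have hinner : ⟪v - r • a, v - r • a⟫ = ⟪v, v⟫ := by
          rw [expand]
          have h4 : r ^ 2 * ⟪a, a⟫ = r * (2 * ⟪v, a⟫) := by rw [← hra]; ring
          linarith
        have h1 : ‖v - r • a‖ ^ 2 = ‖v‖ ^ 2 := by
          rw [← real_inner_self_eq_norm_sq, ← real_inner_self_eq_norm_sq, hinner]
        have h2 := congrArg Real.sqrt h1
        rwa [Real.sqrt_sq (norm_nonneg _), Real.sqrt_sq (norm_nonneg _)] at h2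
      · have hsum1 : ∑ b ∈ Δ', c a b = 1 := by
          have h3 : ∀ b ∈ Δ', c a b = if b = a then 1 else 0 := fun b hb =>
            hcΔ a haΔ b (hΔ'Δ b hb)
          rw [Finset.sum_congr rfl h3, Finset.sum_ite_eq' Δ' a (fun _ => (1:ℝ)), if_pos ha]
        have hstep1 : ht' (v - r • a) = ht' v - r := by
          have e : ∀ b ∈ Δ', c (v - r • a) b = c v b - r * c a b := fun b hb =>
            hcoords b (hΔ'Δ b hb)
          calc ht' (v - r • a) = ∑ b ∈ Δ', (c v b - r * c a b) := Finset.sum_congr rfl e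
          _ = ∑ b ∈ Δ', c v b - r * ∑ b ∈ Δ', c a b := by
              rw [Finset.sum_sub_distrib, Finset.mul_sum]
          _ = ht' v - r := by rw [hsum1, mul_one]
        rw [hstep1]
        linarith
    -- maximize height over the "non-orthogonal" roots of level k
    set Bs := Φ.filter (fun v => c v α = (k:ℝ) ∧ ∃ x ∈ Ψ i, ⟪v, x⟫ ≠ 0) with hBsdef
    have hBne : Bs.Nonempty := ⟨δ0, Finset.mem_filter.mpr ⟨hδ0Φ, hδ0α, x0, hx0, hx0ne⟩⟩
    obtain ⟨d, hdB, hdmax⟩ := Finset.exists_max_image Bs ht' hBne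
    obtain ⟨hdΦ, hdα, xd, hxd, hxdne⟩ := Finset.mem_filter.mp hdB
    have hddom : ∀ a ∈ Δ', 0 ≤ ⟪d, a⟫ := by
      intro a ha
      by_contra hlt
      push_neg at hlt
      obtain ⟨hv'Φ, hv'α, hv'n, hv'ht⟩ := hstep d hdΦ hdα a ha hlt
      set r := 2 * ⟪d, a⟫ / ⟪a, a⟫ with hr
      have haa := hpos0 a (hB.subset (hΔ'Δ a ha))
      have hN : ∃ x ∈ Ψ i, ⟪d - r • a, x⟫ ≠ 0 := by
        obtain ⟨j, hj⟩ := haΨ a ha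
        by_cases hji : j = i
        · subst hji
          refine ⟨a, hj, ?_⟩
          rw [inner_sub_left, real_inner_smul_left]
          have hra : r * ⟪a, a⟫ = 2 * ⟪d, a⟫ := by rw [hr]; field_simp
          intro hzero
          have : ⟪d, a⟫ = 0 := by linarith
          linarith
        · refine ⟨xd, hxd, ?_⟩
          rw [inner_sub_left, real_inner_smul_left, horth j i hji a hj xd hxd,
            mul_zero, sub_zero]
          exact hxdne
      have hmem : d - r • a ∈ Bs := Finset.mem_filter.mpr ⟨hv'Φ, hv'α, hN⟩
      exact absurd (hdmax _ hmem) (not_le.mpr hv'ht)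
    -- maximize height over the roots of level k of maximal length orthogonal to Ψ i
    set Cs := Φ.filter (fun v => c v α = (k:ℝ) ∧ ‖v‖ = ‖γ‖ ∧ ∀ x ∈ Ψ i, ⟪v, x⟫ = 0)
      with hCsdef
    have hγZ : ∀ x ∈ Ψ i, ⟪γ, x⟫ = 0 := (hγorth i).mpr hi
    have hCne : Cs.Nonempty := ⟨γ, Finset.mem_filter.mpr ⟨hγΦ, hγα, rfl, hγZ⟩⟩
    obtain ⟨g, hgC, hgmax⟩ := Finset.exists_max_image Cs ht' hCne
    obtain ⟨hgΦ, hgα, hgnorm, hgZ'⟩ := Finset.mem_filter.mp hgC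
    have hgdom : ∀ a ∈ Δ', 0 ≤ ⟪g, a⟫ := by
      intro a ha
      by_contra hlt
      push_neg at hlt
      obtain ⟨hv'Φ, hv'α, hv'n, hv'ht⟩ := hstep g hgΦ hgα a ha hlt
      set r := 2 * ⟪g, a⟫ / ⟪a, a⟫ with hr
      have hZ2 : ∀ x ∈ Ψ i, ⟪g - r • a, x⟫ = 0 := by
        intro x hx
        obtain ⟨j, hj⟩ := haΨ a ha
        have hji : j ≠ i := by
          intro hji; subst hji
          exact absurd (hgZ' a hj) (by intro hz; rw [hz] at hlt; exact lt_irrefl 0 hlt)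
        rw [inner_sub_left, real_inner_smul_left, horth j i hji a hj x hx,
          mul_zero, sub_zero]
        exact hgZ' x hx
      have hmem : g - r • a ∈ Cs := Finset.mem_filter.mpr
        ⟨hv'Φ, hv'α, by rw [hv'n]; exact hgnorm, hZ2⟩
      exact absurd (hgmax _ hmem) (not_le.mpr hv'ht)
    -- final contradiction
    have hdle : ‖d‖ ≤ ‖g‖ := by rw [hgnorm]; exact hγmax d hdΦ hdα
    rcases le_or_gt ⟪g, d⟫ 0 with hip | hip
    · -- nonpositive inner product: contradiction via orthogonal projection
      set K := Submodule.span ℝ ((Δ' : Finset E) : Set E) with hK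
      have hgdK : g - d ∈ K := by
        rw [hdiffrep g hgΦ d hdΦ (by rw [hgα, hdα])]
        exact Submodule.sum_mem _ fun a ha =>
          Submodule.smul_mem _ _ (Submodule.subset_span (Finset.mem_coe.mpr ha))
      set gp : E := (K.orthogonalProjection g : E) with hgp
      set dp : E := (K.orthogonalProjection d : E) with hdp
      have hgo : g - gp ∈ Kᗮ := K.sub_starProjection_mem_orthogonal g
      have hdo : d - dp ∈ Kᗮ := K.sub_starProjection_mem_orthogonal d
      have hgpK : gp ∈ K := (K.orthogonalProjection g).2
      have hdpK : dp ∈ K := (K.orthogonalProjection d).2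
      have hω : g - gp = d - dp := by
        have h1 : (K.orthogonalProjection (g - d) : E) = g - d :=
          K.starProjection_eq_self_iff.mpr hgdK
        have h2 : (K.orthogonalProjection (g - d) : E) = gp - dp := by
          rw [map_sub, Submodule.coe_sub]
        have h3 : gp - dp = g - d := h2.symm.trans h1
        have h4 : g - gp - (d - dp) = (g - d) - (gp - dp) := by abel
        rw [h3, sub_self] at h4
        exact sub_eq_zero.mp h4
      set ω := g - gp with hωdef
      have hωK : ω ∈ Kᗮ := hgo
      have hωne : ω ≠ 0 := by
        intro h0
        have hgK : g ∈ K := by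
          have h1 : g = gp := by rwa [hωdef, sub_eq_zero] at h0
          rw [h1]; exact hgpK
        obtain ⟨f, -, hf⟩ := Submodule.mem_span_finset.mp hgK
        have hsum : ∑ a ∈ Δ, (c g a - if a = α then 0 else f a) • a = 0 := by
          have e1 := hB.repr g hgΦ
          have e2 : ∑ a ∈ Δ, (if a = α then (0:ℝ) else f a) • a = g := by
            rw [← Finset.add_sum_erase Δ _ hα, if_pos rfl, zero_smul, zero_add, ← hf]
            exact Finset.sum_congr rfl fun a ha => by
              rw [if_neg (Finset.ne_of_mem_erase ha)]
          rw [show (fun a => (c g a - if a = α then (0:ℝ) else f a) • a) = fun a =>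
            (c g a • a - (if a = α then (0:ℝ) else f a) • a) from
              funext fun a => sub_smul _ _ _]
          rw [Finset.sum_sub_distrib, e2, ← e1, sub_self]
        have h5 := hli _ hsum α hα
        rw [if_pos rfl, sub_zero, hgα] at h5
        have h6 : k = 0 := by exact_mod_cast h5
        omega
      have hdd : d = dp + ω := by rw [hω]; abel
      have hgg2 : g = gp + ω := by rw [hωdef]; abel
      have hcross1 : ⟪gp, ω⟫ = 0 := (Submodule.mem_orthogonal K ω).mp hωK gp hgpK
      have hcross2 : ⟪ω, dp⟫ = 0 := by
        rw [real_inner_comm]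
        exact (Submodule.mem_orthogonal K ω).mp hωK dp hdpK
      have hsplit : ⟪g, d⟫ = ⟪gp, dp⟫ + ⟪ω, ω⟫ := by
        calc ⟪g, d⟫ = ⟪gp + ω, dp + ω⟫ := by rw [← hgg2, ← hdd]
        _ = ⟪gp, dp⟫ + ⟪gp, ω⟫ + (⟪ω, dp⟫ + ⟪ω, ω⟫) := by
            rw [inner_add_left, inner_add_right, inner_add_right]
        _ = ⟪gp, dp⟫ + ⟪ω, ω⟫ := by rw [hcross1, hcross2]; ring
      have hgpdom : ∀ a ∈ Δ', 0 ≤ ⟪gp, a⟫ := by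
        intro a ha
        have haK : (a : E) ∈ K := Submodule.subset_span (Finset.mem_coe.mpr ha)
        have h1 : ⟪ω, a⟫ = 0 := by
          rw [real_inner_comm]
          exact (Submodule.mem_orthogonal K ω).mp hωK a haK
        have h2 : ⟪g, a⟫ = ⟪gp, a⟫ + ⟪ω, a⟫ := by rw [hgg2, inner_add_left]
        have := hgdom a ha
        linarith
      have hdpdom : ∀ a ∈ Δ', 0 ≤ ⟪dp, a⟫ := by
        intro a ha
        have haK : (a : E) ∈ K := Submodule.subset_span (Finset.mem_coe.mpr ha)
        have h1 : ⟪ω, a⟫ = 0 := by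
          rw [real_inner_comm]
          exact (Submodule.mem_orthogonal K ω).mp hωK a haK
        have h2 : ⟪d, a⟫ = ⟪dp, a⟫ + ⟪ω, a⟫ := by rw [hdd, inner_add_left]
        have := hddom a ha
        linarith
      have h1 : 0 ≤ ⟪gp, dp⟫ := obtuse_inner_nonneg Δ'
        (fun a ha b hb hne' => hobtuse a (hΔ'Δ a ha) b (hΔ'Δ b hb) hne')
        gp dp hdpK hgpdom hdpdom
      have h2 : 0 < ⟪ω, ω⟫ :=
        lt_of_le_of_ne real_inner_self_nonneg (Ne.symm (inner_self_ne_zero.mpr hωne))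
      linarith
    · -- positive inner product: g - d would be a root of level 0 in Ψ i
      have hgd_ne : g ≠ d := fun he => hxdne (he ▸ hgZ' xd hxd)
      have hgdΦ : g - d ∈ Φ := hdiffroot g hgΦ d hdΦ hgd_ne hip
      have hgdα : c (g - d) α = 0 := by
        have h1 := hsub g hgΦ d hdΦ 1 (by rw [one_smul]; exact hgdΦ) α hα
        rw [one_smul] at h1
        rw [h1, hgα, hdα, one_mul, sub_self]
      obtain ⟨j, hj⟩ := hmem0 (g - d) hgdΦ hgdα
      have hji : j = i := by
        by_contra hne'
        have h1 := horth j i hne' (g - d) hj xd hxd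
        rw [inner_sub_left, hgZ' xd hxd, zero_sub, neg_eq_zero] at h1
        exact hxdne h1
      subst hji
      have h1 : ⟪g, g - d⟫ = 0 := hgZ' _ hj
      rw [inner_sub_right] at h1
      have e1 : ⟪g, g⟫ = ‖g‖ ^ 2 := real_inner_self_eq_norm_sq g
      have e2 : ⟪d, d⟫ = ‖d‖ ^ 2 := real_inner_self_eq_norm_sq d
      have h2 : ‖d‖ ^ 2 ≤ ‖g‖ ^ 2 := by nlinarith [norm_nonneg d, norm_nonneg g]
      have expand : ⟪g - d, g - d⟫ = ⟪g, g⟫ - 2 * ⟪g, d⟫ + ⟪d, d⟫ := by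
        simp only [inner_sub_left, inner_sub_right, real_inner_comm g d]
        ring
      have h3 : ⟪g - d, g - d⟫ ≤ 0 := by rw [expand]; linarith [sub_eq_zero.mp h1]
      have h4 : g - d = 0 := real_inner_self_nonpos.mp h3
      exact hΦ.nonzero _ hgdΦ h4
  
  -- the two relevant sets
  set S : Set E := {δ : E | δ ∈ Φ ∧ c δ α = (k:ℝ)} with hSdef
  set U : Set E := {x : E | ∃ i : Fin t, i.val < h ∧ x ∈ Ψ i} with hUdef
  -- every component with index < h lies in the vector span of S
  have hUV : ∀ x ∈ U, x ∈ vectorSpan ℝ S := by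
    rintro x ⟨j, hjh, hxj⟩
    set T : Set E := {y | y ∈ Ψ j ∧ ∃ δ', δ' ∈ Φ ∧ c δ' α = (k:ℝ) ∧ ⟪δ', y⟫ ≠ 0} with hTdef
    have hTsub : T ⊆ Ψ j := fun y hy => hy.1
    have hTorth : ∀ u ∈ T, ∀ v ∈ Ψ j \ T, ⟪u, v⟫ = 0 := by
      intro u hu v hv
      by_contra huv
      obtain ⟨huj, δ', hδ'Φ, hδ'α, hδ'u⟩ := hu
      obtain ⟨hvj, hvT⟩ := hv
      apply hvT
      by_cases h1 : ⟪δ', v⟫ = 0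
      · have huΦ : u ∈ Φ := (hΨΦ j u huj).1
        have huα : c u α = 0 := (hΨΦ j u huj).2
        set r := 2 * ⟪δ', u⟫ / ⟪u, u⟫ with hrdef
        have hrne : r ≠ 0 := div_ne_zero
          (by intro hz; exact hδ'u (by linarith)) (ne_of_gt (hpos0 u huΦ))
        have hδ'' : δ' - r • u ∈ Φ := hΦ.reflect u huΦ δ' hδ'Φ
        refine ⟨hvj, δ' - r • u, hδ'', ?_, ?_⟩
        · rw [hsub δ' hδ'Φ u huΦ r hδ'' α hα, huα, mul_zero, sub_zero, hδ'α]
        · rw [inner_sub_left, real_inner_smul_left, h1, zero_sub, neg_ne_zero]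
          exact mul_ne_zero hrne huv
      · exact ⟨hvj, δ', hδ'Φ, hδ'α, h1⟩
    have hTne : T ≠ ∅ := by
      have hjlt : ¬ (h ≤ j.val) := not_le.mpr hjh
      have h1 : ¬ ∀ y ∈ Ψ j, ⟪γ, y⟫ = 0 := fun hz => hjlt ((hγorth j).mp hz)
      push_neg at h1
      obtain ⟨y, hy, hyne⟩ := h1
      exact Set.nonempty_iff_ne_empty.mp ⟨y, hy, γ, hγΦ, hγα, hyne⟩
    have hT : T = Ψ j := (hirrc j T hTsub hTorth).resolve_left hTne
    have hxT : x ∈ T := hT ▸ hxj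
    obtain ⟨-, δ', hδ'Φ, hδ'α, hδ'x⟩ := hxT
    have hxΦ : x ∈ Φ := (hΨΦ j x hxj).1
    have hxα : c x α = 0 := (hΨΦ j x hxj).2
    set r := 2 * ⟪δ', x⟫ / ⟪x, x⟫ with hrdef
    have hrne : r ≠ 0 := div_ne_zero
      (by intro hz; exact hδ'x (by linarith)) (ne_of_gt (hpos0 x hxΦ))
    have hrefl : δ' - r • x ∈ Φ := hΦ.reflect x hxΦ δ' hδ'Φ
    have hlevel : c (δ' - r • x) α = (k:ℝ) := by
      rw [hsub δ' hδ'Φ x hxΦ r hrefl α hα, hxα, mul_zero, sub_zero, hδ'α]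
    have hd1 : δ' ∈ S := ⟨hδ'Φ, hδ'α⟩
    have hd2 : δ' - r • x ∈ S := ⟨hrefl, hlevel⟩
    have h0 : δ' -ᵥ (δ' - r • x) ∈ S -ᵥ S := Set.vsub_mem_vsub hd1 hd2
    have h1 : δ' -ᵥ (δ' - r • x) = r • x := by rw [vsub_eq_sub]; abel
    rw [h1] at h0
    have h2 : r • x ∈ vectorSpan ℝ S := by
      rw [vectorSpan_def]; exact Submodule.subset_span h0
    have h3 := (vectorSpan ℝ S).smul_mem r⁻¹ h2
    rwa [inv_smul_smul₀ hrne] at h3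
  -- the vector span of S is contained in the span of the components with index < h
  have hVU : vectorSpan ℝ S ≤ Submodule.span ℝ U := by
    rw [vectorSpan_def, Submodule.span_le]
    intro z hz
    rw [Set.mem_vsub] at hz
    obtain ⟨p, hp, q, hq, rfl⟩ := hz
    obtain ⟨hpΦ, hpα⟩ := hp
    obtain ⟨hqΦ, hqα⟩ := hq
    rw [SetLike.mem_coe, vsub_eq_sub]
    set Uhi : Set E := {x : E | ∃ i : Fin t, h ≤ i.val ∧ x ∈ Ψ i} with hUhidef
    have hmem_all : p - q ∈ Submodule.span ℝ (U ∪ Uhi) := by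
      rw [hdiffrep p hpΦ q hqΦ (by rw [hpα, hqα])]
      refine Submodule.sum_mem _ fun a ha =>
        Submodule.smul_mem _ _ (Submodule.subset_span ?_)
      obtain ⟨j, hj⟩ := haΨ a ha
      rcases lt_or_ge j.val h with hcase | hcase
      · exact Or.inl ⟨j, hcase, hj⟩
      · exact Or.inr ⟨j, hcase, hj⟩
    rw [Submodule.span_union, Submodule.mem_sup] at hmem_all
    obtain ⟨l, hl, q', hq', hlq⟩ := hmem_all
    have horthUhi : ∀ y ∈ Uhi, ⟪p - q, y⟫ = 0 := by
      rintro y ⟨i, hi, hyi⟩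
      rw [inner_sub_left, hA i hi p hpΦ hpα y hyi, hA i hi q hqΦ hqα y hyi, sub_zero]
    have h1 : ⟪p - q, q'⟫ = 0 := inner_span_zero horthUhi q' hq'
    have h2 : ⟪l, q'⟫ = 0 := by
      have hly : ∀ y ∈ Uhi, ⟪l, y⟫ = 0 := by
        intro y hy
        obtain ⟨iY, hiY, hyY⟩ := hy
        have hyU : ∀ z ∈ U, ⟪y, z⟫ = 0 := by
          rintro z ⟨j, hjh, hzj⟩
          have hne' : iY ≠ j := by
            intro he; rw [he] at hiY; omega
          exact horth iY j hne' y hyY z hzj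
        have h4 := inner_span_zero hyU l hl
        rw [real_inner_comm]; exact h4
      exact inner_span_zero hly q' hq'
    have hq'0 : q' = 0 := by
      have h3 : ⟪p - q, q'⟫ = ⟪l, q'⟫ + ⟪q', q'⟫ := by rw [← hlq, inner_add_left]
      have h4 : ⟪q', q'⟫ = 0 := by linarith
      exact inner_self_eq_zero.mp h4
    rw [← hlq, hq'0, add_zero]
    exact hl
  have hfinal : vectorSpan ℝ S = Submodule.span ℝ U :=
    le_antisymm hVU (Submodule.span_le.mpr (fun x hx => hUV x hx))
  have hconv : vectorSpan ℝ (convexHull ℝ S) = vectorSpan ℝ S := by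
    rw [← direction_affineSpan, affineSpan_convexHull, direction_affineSpan]
  rw [hconv, hfinal]
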